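/- Let M be a matroid on a finite linearly ordered set E. The set of spanning subsets of M (sets of full rank) is the disjoint union, over all bases B of M, of the boolean intervals [B, B ∪ Ext(B)]; consequently the number of spanning subsets equals t(M;1,2). -/

import Mathlib

namespace AB
open Set

variable {α : Type*}

/-- A circuit of a matroid: a minimal dependent set. -/
def Circuit (M : Matroid α) (C : Set α) : Prop :=
  M.Dep C ∧ ∀ D, D ⊂ C → M.Indep D

/-- A cocircuit: a circuit of the dual matroid. -/
def Cocircuit (M : Matroid α) (C : Set α) : Prop := Circuit M✶ C

/-- `b` is internally active for the basis `B`: `b ∈ B` and `b` is the minimum of the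
fundamental cocircuit `C*(B;b)`, the unique cocircuit contained in `(M.E \ B) ∪ {b}`. -/
def IntActive [LinearOrder α] (M : Matroid α) (B : Set α) (b : α) : Prop :=
  b ∈ B ∧ ∃ C, Cocircuit M C ∧ C ⊆ (M.E \ B) ∪ {b} ∧ b ∈ C ∧ ∀ x ∈ C, b ≤ x

/-- `e` is externally active for the basis `B`: `e ∈ M.E \ B` and `e` is the minimum of the
fundamental circuit `C(B;e)`, the unique circuit contained in `B ∪ {e}`. -/
def ExtActive [LinearOrder α] (M : Matroid α) (B : Set α) (e : α) : Prop :=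
  e ∈ M.E \ B ∧ ∃ C, Circuit M C ∧ C ⊆ B ∪ {e} ∧ e ∈ C ∧ ∀ x ∈ C, e ≤ x

/-- `Int(B)`, the set of internally active elements of `B`. -/
def IntSet [LinearOrder α] (M : Matroid α) (B : Set α) : Set α := {b | IntActive M B b}

/-- `Ext(B)`, the set of externally active elements of `B`. -/
def ExtSet [LinearOrder α] (M : Matroid α) (B : Set α) : Set α := {e | ExtActive M B e}

end AB

attribute [local instance] Classical.propDecidable

namespace AB
/-- The Tutte polynomial of an ordered matroid, evaluated at `(x, y)`, via Crapo's
expression in terms of basis activities: `t(M;x,y) = Σ_B x^|Int(B)| y^|Ext(B)|`. -/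
noncomputable def tutteEval {α : Type*} [Fintype α] [LinearOrder α]
    (M : Matroid α) (x y : ℤ) : ℤ :=
  ∑ B ∈ Finset.univ.powerset.filter (fun B : Finset α => M.IsBase ↑B),
    x ^ (AB.IntSet M ↑B).ncard * y ^ (AB.ExtSet M ↑B).ncard
end AB

namespace AB
/-- The rank of a set `X` in a matroid `M`: the largest cardinality of an
independent subset of `X`. -/
noncomputable def rank {α : Type*} (M : Matroid α) (X : Set α) : ℕ :=
  sSup {n : ℕ | ∃ I, I ⊆ X ∧ M.Indep I ∧ I.ncard = n}

/-- A subset is spanning if it has full rank. -/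
def Spanning {α : Type*} (M : Matroid α) (A : Set α) : Prop :=
  A ⊆ M.E ∧ rank M A = rank M M.E
end AB


namespace AB
open Set Matroid

section MainAux
variable {α : Type*} [Fintype α] [LinearOrder α] {M : Matroid α}

/-- Every dependent set contains a circuit. -/
lemma exists_circuit_subset {D : Set α} (hD : M.Dep D) (hfin : D.Finite) :
    ∃ C ⊆ D, Circuit M C := by
  by_cases h : ∀ D', D' ⊂ D → M.Indep D'
  · exact ⟨D, subset_rfl, hD, h⟩
  · push_neg at h
    obtain ⟨D', hss, hdep⟩ := h
    have hD' : M.Dep D' := ⟨hdep, hss.subset.trans hD.subset_ground⟩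
    obtain ⟨C, hCD, hC⟩ := exists_circuit_subset hD' (hfin.subset hss.subset)
    exact ⟨C, hCD.trans hss.subset, hC⟩
termination_by D.ncard
decreasing_by exact Set.ncard_lt_ncard hss hfin

/-- Fundamental circuit existence. -/
lemma exists_fund_circuit {I : Set α} {e : α} (hI : M.Indep I) (he : e ∈ M.closure I)
    (heI : e ∉ I) : ∃ C, Circuit M C ∧ C ⊆ insert e I ∧ e ∈ C := by
  have hdep : M.Dep (insert e I) := hI.insert_dep_iff.2 ⟨he, heI⟩
  obtain ⟨C, hCD, hC⟩ := exists_circuit_subset hdep (Set.toFinite _)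
  refine ⟨C, hC, hCD, ?_⟩
  by_contra heC
  have hCI : C ⊆ I := fun x hx => ((hCD hx).resolve_left (fun h => heC (h ▸ hx)))
  exact hC.1.not_indep (hI.subset hCI)

lemma Circuit.mem_closure_diff {C : Set α} {e : α} (hC : Circuit M C) (he : e ∈ C) :
    e ∈ M.closure (C \ {e}) := by
  have hind : M.Indep (C \ {e}) := hC.2 _ (Set.sdiff_singleton_ssubset.2 he)
  have hdep : M.Dep (insert e (C \ {e})) := by
    rw [Set.insert_diff_singleton, Set.insert_eq_self.2 he]; exact hC.1
  exact (hind.insert_dep_iff.1 hdep).1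

/-- Existence half of the decomposition. -/
lemma exists_base_ext (hE : M.E = Set.univ) {A : Set α} (hA : M.Spanning A) :
    ∃ B : Set α, M.IsBase B ∧ B ⊆ A ∧ A ⊆ B ∪ ExtSet M B := by
  classical
  set B := {x ∈ A | x ∉ M.closure (A ∩ Set.Ioi x)} with hBdef
  have hBA : B ⊆ A := fun x hx => hx.1
  have key : ∀ x : α, x ∈ A → x ∈ M.closure (B ∩ Set.Ici x) := by
    intro x
    refine (Finite.to_wellFoundedGT.wf).induction
      (C := fun x => x ∈ A → x ∈ M.closure (B ∩ Set.Ici x)) x ?_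
    intro x IH hxA
    by_cases hxB : x ∈ B
    · exact M.subset_closure _ (by rw [hE]; exact Set.subset_univ _) ⟨hxB, le_refl x⟩
    · have hx : x ∈ M.closure (A ∩ Set.Ioi x) := by
        by_contra h; exact hxB ⟨hxA, h⟩
      have hsub : A ∩ Set.Ioi x ⊆ M.closure (B ∩ Set.Ioi x) := by
        rintro y ⟨hyA, hyx⟩
        refine M.closure_subset_closure
          (Set.inter_subset_inter Set.Subset.rfl (Set.Ici_subset_Ioi.2 hyx)) (IH y hyx hyA)
      exact M.closure_subset_closure
        (Set.inter_subset_inter Set.Subset.rfl Set.Ioi_subset_Ici_self)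
        (M.closure_subset_closure_of_subset_closure hsub hx)
  have keyIoi : ∀ e : α, A ∩ Set.Ioi e ⊆ M.closure (B ∩ Set.Ioi e) := by
    rintro e y ⟨hyA, hye⟩
    exact M.closure_subset_closure
      (Set.inter_subset_inter Set.Subset.rfl (Set.Ici_subset_Ioi.2 hye)) (key y hyA)
  have hBi : M.Indep B := by
    by_contra hni
    have hdep : M.Dep B := ⟨hni, by rw [hE]; exact Set.subset_univ _⟩
    obtain ⟨C, hCB, hC⟩ := exists_circuit_subset hdep (Set.toFinite _)
    have hCne : C.Nonempty := by
      rcases C.eq_empty_or_nonempty with h | h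
      · exact absurd (h ▸ M.empty_indep) hC.1.not_indep
      · exact h
    obtain ⟨e, heC, hmin⟩ := Set.exists_min_image C id (Set.toFinite C) hCne
    have h1 : e ∈ M.closure (C \ {e}) := hC.mem_closure_diff heC
    have h2 : C \ {e} ⊆ A ∩ Set.Ioi e := by
      rintro x ⟨hxC, hxe⟩
      exact ⟨hBA (hCB hxC),
        (hmin x hxC).lt_of_ne (fun h => hxe (Set.mem_singleton_iff.2 (by simpa using h.symm)))⟩
    exact (hCB heC).2 (M.closure_subset_closure h2 h1)
  have hBb : M.IsBase B := by
    refine hBi.isBase_of_spanning ?_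
    have hAc : A ⊆ M.closure B :=
      fun x hx => M.closure_subset_closure Set.inter_subset_left (key x hx)
    have h1 : M.closure A ⊆ M.closure B := M.closure_subset_closure_of_subset_closure hAc
    rw [Matroid.spanning_iff_closure_eq]
    refine subset_antisymm (M.closure_subset_ground _) ?_
    rw [← (Matroid.spanning_iff_closure_eq hA.subset_ground).1 hA]
    exact h1
  refine ⟨B, hBb, hBA, ?_⟩
  intro e heA
  by_cases heB : e ∈ B
  · exact Or.inl heB
  right
  have he : e ∈ M.closure (A ∩ Set.Ioi e) := by
    by_contra h; exact heB ⟨heA, h⟩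
  have he2 : e ∈ M.closure (B ∩ Set.Ioi e) :=
    M.closure_subset_closure_of_subset_closure (keyIoi e) he
  have hind : M.Indep (B ∩ Set.Ioi e) := hBi.subset Set.inter_subset_left
  obtain ⟨C, hC, hCs, heC⟩ := exists_fund_circuit hind he2 (fun h => lt_irrefl e h.2)
  refine ⟨by rw [hE]; exact ⟨Set.mem_univ e, heB⟩, C, hC, ?_, heC, ?_⟩
  · intro x hx
    rcases hCs hx with rfl | hx'
    · exact Or.inr rfl
    · exact Or.inl hx'.1
  · intro x hx
    rcases hCs hx with rfl | hx'
    · exact le_refl x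
    · exact le_of_lt hx'.2

/-- Core of the uniqueness argument. -/
lemma uniq_core {B₁ B₂ A : Set α} (hB₁ : M.Indep B₁)
    (hA₂ : A ⊆ B₂ ∪ ExtSet M B₂) (hB₁A : B₁ ⊆ A) {e : α} (he : e ∈ B₁ \ B₂)
    (hmax : ∀ x ∈ (B₁ \ B₂) ∪ (B₂ \ B₁), x ≤ e) : False := by
  have heA : e ∈ A := hB₁A he.1
  rcases hA₂ heA with h | hext
  · exact he.2 h
  obtain ⟨-, C, hC, hCsub, heC, hemin⟩ := hext
  have hCB₁ : C ⊆ B₁ := by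
    intro x hxC
    rcases hCsub hxC with hxB₂ | hxe
    · by_contra hxB₁
      have hxe : x ≤ e := hmax x (Or.inr ⟨hxB₂, hxB₁⟩)
      have : x = e := le_antisymm hxe (hemin x hxC)
      exact he.2 (this ▸ hxB₂)
    · rw [Set.mem_singleton_iff] at hxe
      exact hxe ▸ he.1
  exact hC.1.not_indep (hB₁.subset hCB₁)

lemma uniq {B₁ B₂ : Set α} (hB₁ : M.IsBase B₁) (hB₂ : M.IsBase B₂) (hne : B₁ ≠ B₂)
    (A : Set α) : ¬ ((B₁ ⊆ A ∧ A ⊆ B₁ ∪ ExtSet M B₁) ∧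
      (B₂ ⊆ A ∧ A ⊆ B₂ ∪ ExtSet M B₂)) := by
  rintro ⟨⟨hs₁, hu₁⟩, hs₂, hu₂⟩
  have hdne : ((B₁ \ B₂) ∪ (B₂ \ B₁)).Nonempty := by
    rw [Set.nonempty_iff_ne_empty]
    intro h
    rw [Set.union_empty_iff, Set.diff_eq_empty, Set.diff_eq_empty] at h
    exact hne (subset_antisymm h.1 h.2)
  obtain ⟨e, heD, hmax⟩ := Set.exists_max_image _ id (Set.toFinite _) hdne
  rcases heD with he | he
  · exact uniq_core hB₁.indep hu₂ hs₁ he hmax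
  · exact uniq_core hB₂.indep hu₁ hs₂ he (fun x hx => hmax x hx.symm)

lemma rank_eq_basis (hE : M.E = Set.univ) {X I : Set α} (hI : M.IsBasis I X) :
    AB.rank M X = I.ncard := by
  apply le_antisymm
  · have hne : {n : ℕ | ∃ I, I ⊆ X ∧ M.Indep I ∧ I.ncard = n}.Nonempty :=
      ⟨0, ∅, Set.empty_subset X, M.empty_indep, Set.ncard_empty α⟩
    apply csSup_le hne
    rintro n ⟨J, hJX, hJi, rfl⟩
    obtain ⟨J', hJ', hJJ'⟩ := hJi.subset_isBasis_of_subset hJX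
      (by rw [hE]; exact Set.subset_univ _)
    calc J.ncard ≤ J'.ncard := Set.ncard_le_ncard hJJ' (Set.toFinite _)
    _ = I.ncard := by rw [Set.ncard_def, hJ'.encard_eq_encard hI, ← Set.ncard_def]
  · refine le_csSup ⟨Fintype.card α, ?_⟩ ⟨I, hI.subset, hI.indep, rfl⟩
    rintro n ⟨J, hJX, hJi, rfl⟩
    calc J.ncard ≤ (Set.univ : Set α).ncard :=
          Set.ncard_le_ncard (Set.subset_univ _) Set.finite_univ
    _ = Fintype.card α := by rw [Set.ncard_univ, Nat.card_eq_fintype_card]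

lemma spanning_iff_spanning (hE : M.E = Set.univ) {A : Set α} :
    AB.Spanning M A ↔ M.Spanning A := by
  obtain ⟨J, hJ⟩ := M.exists_isBasis M.E subset_rfl
  have hJb : M.IsBase J := Matroid.isBasis_ground_iff.1 hJ
  constructor
  · rintro ⟨hAE, hr⟩
    obtain ⟨I, hI⟩ := M.exists_isBasis A (by rw [hE]; exact Set.subset_univ _)
    rw [rank_eq_basis hE hI, rank_eq_basis hE hJ] at hr
    obtain ⟨B', hB', hIB'⟩ := hI.indep.exists_isBase_superset
    have hcard : B'.ncard ≤ I.ncard := by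
      rw [hr, hB'.ncard_eq_ncard_of_isBase hJb]
    have hIB : I = B' := Set.eq_of_subset_of_ncard_le hIB' hcard (Set.toFinite _)
    rw [Matroid.spanning_iff_exists_isBase_subset]
    exact ⟨I, hIB ▸ hB', hI.subset⟩
  · intro hsp
    obtain ⟨B, hB, hBA⟩ := hsp.exists_isBase_subset
    refine ⟨hsp.subset_ground, ?_⟩
    obtain ⟨I, hI, hBI⟩ := hB.indep.subset_isBasis_of_subset hBA
      (by rw [hE]; exact Set.subset_univ _)
    have hBIeq : B = I := hB.eq_of_subset_indep hI.indep hBI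
    rw [rank_eq_basis hE hI, rank_eq_basis hE hJ, ← hBIeq]
    exact hB.ncard_eq_ncard_of_isBase hJb

lemma part1 (hE : M.E = Set.univ) (A : Set α) :
    AB.Spanning M A ↔ ∃ B : Set α, M.IsBase B ∧ B ⊆ A ∧ A ⊆ B ∪ ExtSet M B := by
  rw [spanning_iff_spanning hE]
  constructor
  · exact exists_base_ext hE
  · rintro ⟨B, hB, hBA, -⟩
    rw [Matroid.spanning_iff_exists_isBase_subset (by rw [hE]; exact Set.subset_univ _)]
    exact ⟨B, hB, hBA⟩

end MainAux
end AB

/-- The spanning subsets of `M` are the disjoint union, over all bases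
`B`, of the boolean intervals `[B, B ∪ Ext(B)]`; consequently the number of spanning
subsets equals `t(M;1,2)`. -/
theorem stmt_9 {α : Type*} [Fintype α] [LinearOrder α] (M : Matroid α)
    (hE : M.E = Set.univ) :
    (∀ A : Set α, AB.Spanning M A ↔
      ∃ B : Set α, M.IsBase B ∧ B ⊆ A ∧ A ⊆ B ∪ AB.ExtSet M B) ∧
    (∀ B₁ B₂ : Set α, M.IsBase B₁ → M.IsBase B₂ → B₁ ≠ B₂ →
      ∀ A : Set α, ¬ ((B₁ ⊆ A ∧ A ⊆ B₁ ∪ AB.ExtSet M B₁) ∧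
        (B₂ ⊆ A ∧ A ⊆ B₂ ∪ AB.ExtSet M B₂))) ∧
    (((Finset.univ.powerset.filter (fun A : Finset α => AB.Spanning M ↑A)).card : ℤ)
      = AB.tutteEval M 1 2) := by
  classical
  refine ⟨AB.part1 hE, fun B₁ B₂ h₁ h₂ hne A => AB.uniq h₁ h₂ hne A, ?_⟩
  set f : Finset α → Finset α := fun A =>
    if h : ∃ B : Set α, M.IsBase B ∧ B ⊆ ↑A ∧ ↑A ⊆ B ∪ AB.ExtSet M B then
      h.choose.toFinset else ∅ with hf
  have hmaps : ∀ A ∈ Finset.univ.powerset.filter (fun A : Finset α => AB.Spanning M ↑A),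
      f A ∈ Finset.univ.powerset.filter (fun B : Finset α => M.IsBase ↑B) := by
    intro A hA
    rw [Finset.mem_filter] at hA
    have h : ∃ B : Set α, M.IsBase B ∧ B ⊆ ↑A ∧ ↑A ⊆ B ∪ AB.ExtSet M B :=
      (AB.part1 hE _).1 hA.2
    rw [hf]
    simp only [dif_pos h]
    rw [Finset.mem_filter]
    refine ⟨Finset.mem_powerset.2 (Finset.subset_univ _), ?_⟩
    have h1 := h.choose_spec.1
    rwa [Set.coe_toFinset]
  rw [Finset.card_eq_sum_card_fiberwise hmaps, AB.tutteEval]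
  push_cast
  apply Finset.sum_congr rfl
  intro B hB
  rw [Finset.mem_filter] at hB
  have hBb : M.IsBase (↑B : Set α) := hB.2
  have hfib : (Finset.univ.powerset.filter (fun A : Finset α => AB.Spanning M ↑A)).filter
        (fun A => f A = B)
      = Finset.Icc B (B ∪ (AB.ExtSet M (↑B : Set α)).toFinset) := by
    ext A
    simp only [Finset.mem_filter, Finset.mem_Icc, Finset.mem_powerset, Finset.le_iff_subset]
    constructor
    · rintro ⟨⟨-, hsp⟩, hfA⟩
      have h : ∃ B' : Set α, M.IsBase B' ∧ B' ⊆ ↑A ∧ ↑A ⊆ B' ∪ AB.ExtSet M B' :=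
        (AB.part1 hE _).1 hsp
      rw [hf] at hfA
      simp only [dif_pos h] at hfA
      obtain ⟨hb', hsub1, hsub2⟩ := h.choose_spec
      have hBeq : h.choose = (↑B : Set α) := by rw [← hfA, Set.coe_toFinset]
      rw [hBeq] at hsub1 hsub2
      constructor
      · exact fun x hx => Finset.mem_coe.1 (hsub1 (Finset.mem_coe.2 hx))
      · intro x hx
        rcases hsub2 (Finset.mem_coe.2 hx) with h' | h'
        · exact Finset.mem_union.2 (Or.inl (Finset.mem_coe.1 h'))
        · exact Finset.mem_union.2 (Or.inr (Set.mem_toFinset.2 h'))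
    · rintro ⟨hBA, hABE⟩
      have hsub1 : (↑B : Set α) ⊆ ↑A := Finset.coe_subset.2 hBA
      have hsub2 : (↑A : Set α) ⊆ ↑B ∪ AB.ExtSet M ↑B := by
        intro x hx
        rcases Finset.mem_union.1 (hABE (Finset.mem_coe.1 hx)) with h' | h'
        · exact Or.inl (Finset.mem_coe.2 h')
        · exact Or.inr (Set.mem_toFinset.1 h')
      have h : ∃ B' : Set α, M.IsBase B' ∧ B' ⊆ ↑A ∧ ↑A ⊆ B' ∪ AB.ExtSet M B' :=
        ⟨↑B, hBb, hsub1, hsub2⟩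
      have hsp : AB.Spanning M ↑A := (AB.part1 hE _).2 h
      refine ⟨⟨Finset.subset_univ _, hsp⟩, ?_⟩
      rw [hf]
      simp only [dif_pos h]
      obtain ⟨hb', hsub1', hsub2'⟩ := h.choose_spec
      have hBeq : h.choose = (↑B : Set α) := by
        by_contra hne
        exact AB.uniq hb' hBb hne (↑A : Set α) ⟨⟨hsub1', hsub2'⟩, hsub1, hsub2⟩
      rw [hBeq, Finset.toFinset_coe]
  rw [hfib, Finset.card_Icc_finset Finset.subset_union_left]
  have hdisj : Disjoint B (AB.ExtSet M (↑B : Set α)).toFinset := by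
    rw [Finset.disjoint_left]
    intro a haB haE
    rw [Set.mem_toFinset] at haE
    exact haE.1.2 haB
  rw [Finset.card_union_of_disjoint hdisj, Nat.add_sub_cancel_left]
  rw [Set.ncard_eq_toFinset_card' (AB.ExtSet M (↑B : Set α))]
  push_cast
  ring
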